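/- Fix u, v ∈ ℂ with u − v ≠ 0 and u − v + cκ ≠ 0, and let T(u), T(v) ∈ M_N(A). Then the RTT relation R(u,v) T₁(u) T₂(v) = T₂(v) T₁(u) R(u,v) holds if and only if for all indices −n ≤ i, j, k, l ≤ n the entrywise commutation relation holds: [T_{i,j}(u), T_{k,l}(v)] = (c/(u−v)) ( T_{k,j}(v) T_{i,l}(u) − T_{k,j}(u) T_{i,l}(v) ) + (c/(u−v+cκ)) ( δ_{k,−i} Σ_{p=−n}^{n} T_{p,j}(u) T_{−p,l}(v) − δ_{l,−j} Σ_{p=−n}^{n} T_{k,−p}(v) T_{i,p}(u) ). -/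

import Mathlib

open scoped Kronecker

noncomputable section

/-- Index set `{-n, …, n}` for matrices of size `N = 2n+1`. -/
abbrev Idx (n : ℕ) : Type := {i : ℤ // i ∈ Finset.Icc (-(n : ℤ)) (n : ℤ)}

/-- Negation `i ↦ -i` on the index set. -/
def Idx.neg {n : ℕ} (i : Idx n) : Idx n :=
  ⟨-i.1, by
    have h := Finset.mem_Icc.mp i.2
    exact Finset.mem_Icc.mpr ⟨by omega, by omega⟩⟩

/-- Matrix unit `e_{i,j}`. -/
def matE {n : ℕ} (i j : Idx n) : Matrix (Idx n) (Idx n) ℂ :=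
  Matrix.single i j 1

/-- `P = Σ_{i,j} e_{i,j} ⊗ e_{j,i}`. -/
def Pmat (n : ℕ) : Matrix (Idx n × Idx n) (Idx n × Idx n) ℂ :=
  ∑ i : Idx n, ∑ j : Idx n, matE i j ⊗ₖ matE j i

/-- `Q = Σ_{i,j} e_{i,j} ⊗ e_{-i,-j}`. -/
def Qmat (n : ℕ) : Matrix (Idx n × Idx n) (Idx n × Idx n) ℂ :=
  ∑ i : Idx n, ∑ j : Idx n, matE i j ⊗ₖ matE i.neg j.neg

/-- `κ = n - 1/2`. -/
def kappa (n : ℕ) : ℂ := (n : ℂ) - 1 / 2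

/-- The `o_{2n+1}`-invariant `R`-matrix
`R(u,v) = I⊗I + (c/(u−v)) P − (c/(u−v+cκ)) Q`. -/
def Rmat (n : ℕ) (c u v : ℂ) : Matrix (Idx n × Idx n) (Idx n × Idx n) ℂ :=
  1 + (c / (u - v)) • Pmat n - (c / (u - v + c * kappa n)) • Qmat n


/-- The RTT relation at `(u,v)` for a pair of matrices with entries in a
ℂ-algebra `A`: `R(u,v) T₁(u) T₂(v) = T₂(v) T₁(u) R(u,v)`. -/
def RTTrel (n : ℕ) (c u v : ℂ) {A : Type*} [Ring A] [Algebra ℂ A]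
    (Tu Tv : Matrix (Idx n) (Idx n) A) : Prop :=
  (Rmat n c u v).map (algebraMap ℂ A) * (Tu ⊗ₖ (1 : Matrix (Idx n) (Idx n) A)) *
      ((1 : Matrix (Idx n) (Idx n) A) ⊗ₖ Tv) =
    ((1 : Matrix (Idx n) (Idx n) A) ⊗ₖ Tv) * (Tu ⊗ₖ (1 : Matrix (Idx n) (Idx n) A)) *
      (Rmat n c u v).map (algebraMap ℂ A)

section Aux
set_option linter.unusedSectionVars false
lemma Pmat_apply {n : ℕ} (i k p q : Idx n) :
    Pmat n (i,k) (p,q) = if p = k ∧ q = i then 1 else 0 := by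
  simp only [Pmat, Matrix.sum_apply, Matrix.kroneckerMap_apply, matE,
    Matrix.single, Matrix.of_apply]
  rw [Fintype.sum_eq_single i, Fintype.sum_eq_single p]
  · by_cases h1 : p = k <;> by_cases h2 : q = i
    · subst h1; subst h2; simp
    · subst h1; simp [h2, if_neg (fun h : i = q => h2 h.symm)]
    · subst h2; simp [h1, if_neg (fun h : k = p => h1 h.symm)]
    · simp [h1, h2, if_neg (fun h : i = q => h2 h.symm),
        if_neg (fun h : k = p => h1 h.symm)]
  · intro y hy; simp [hy]
  · intro x hx
    rw [Fintype.sum_eq_single p] <;> simp [hx]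

lemma Qmat_apply {n : ℕ} (i k p q : Idx n) :
    Qmat n (i,k) (p,q) = if k = i.neg ∧ q = p.neg then 1 else 0 := by
  simp only [Qmat, Matrix.sum_apply, Matrix.kroneckerMap_apply, matE,
    Matrix.single, Matrix.of_apply]
  rw [Fintype.sum_eq_single i, Fintype.sum_eq_single p]
  · by_cases h1 : k = i.neg <;> by_cases h2 : q = p.neg
    · subst h1; subst h2; simp
    · simp [h1, h2, if_neg (fun h : Idx.neg p = q => h2 h.symm)]
    · simp [h1, h2, if_neg (fun h : Idx.neg i = k => h1 h.symm)]
    · simp only [h1, h2, and_false, if_false]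
      simp only [and_true, if_true, eq_self_iff_true, one_mul, true_and]
      rw [if_neg]
      exact fun h => h2 h.2.symm
  · intro y hy; simp [hy]
  · intro x hx
    rw [Fintype.sum_eq_single p] <;> simp [hx]

variable {A : Type*} [Ring A] [Algebra ℂ A]

lemma mid1_apply {n : ℕ} (Tu Tv : Matrix (Idx n) (Idx n) A) (p q j l : Idx n) :
    ((Tu ⊗ₖ (1 : Matrix (Idx n) (Idx n) A)) * ((1 : Matrix (Idx n) (Idx n) A) ⊗ₖ Tv))
      (p,q) (j,l) = Tu p j * Tv q l := by
  rw [Matrix.mul_apply, Fintype.sum_eq_single ((j,q) : Idx n × Idx n)]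
  · simp [Matrix.one_apply]
  · rintro ⟨a,b⟩ hx
    simp only [Matrix.kroneckerMap_apply]
    by_cases ha : a = j
    · subst ha
      have hb : q ≠ b := by rintro rfl; exact hx rfl
      rw [Matrix.one_apply, if_neg hb, mul_zero, zero_mul]
    · simp [Matrix.one_apply, ha]

lemma mid2_apply {n : ℕ} (Tu Tv : Matrix (Idx n) (Idx n) A) (i k p q : Idx n) :
    (((1 : Matrix (Idx n) (Idx n) A) ⊗ₖ Tv) * (Tu ⊗ₖ (1 : Matrix (Idx n) (Idx n) A)))
      (i,k) (p,q) = Tv k q * Tu i p := by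
  rw [Matrix.mul_apply, Fintype.sum_eq_single ((i,q) : Idx n × Idx n)]
  · simp [Matrix.one_apply]
  · rintro ⟨a,b⟩ hx
    simp only [Matrix.kroneckerMap_apply]
    by_cases ha : a = i
    · subst ha
      have hb : b ≠ q := by rintro rfl; exact hx rfl
      simp [Matrix.one_apply, hb]
    · simp [Matrix.one_apply, Ne.symm ha]

set_option linter.unusedSectionVars false

lemma lhs_entry {n : ℕ} (c u v : ℂ) (Tu Tv : Matrix (Idx n) (Idx n) A) (i j k l : Idx n) :
    ((Rmat n c u v).map (algebraMap ℂ A) * (Tu ⊗ₖ (1 : Matrix (Idx n) (Idx n) A)) *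
      ((1 : Matrix (Idx n) (Idx n) A) ⊗ₖ Tv)) (i,k) (j,l)
    = Tu i j * Tv k l + (c/(u-v)) • (Tu k j * Tv i l)
      - (c/(u-v+c*kappa n)) • (if k = i.neg then ∑ p : Idx n, Tu p j * Tv p.neg l else 0) := by
  rw [Matrix.mul_assoc, Matrix.mul_apply]
  have hmid : ∀ x : Idx n × Idx n,
      ((Tu ⊗ₖ (1 : Matrix (Idx n) (Idx n) A)) * ((1 : Matrix (Idx n) (Idx n) A) ⊗ₖ Tv)) x (j,l)
        = Tu x.1 j * Tv x.2 l := fun x => mid1_apply Tu Tv x.1 x.2 j l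
  simp only [hmid]
  rw [Fintype.sum_prod_type]
  simp only [Matrix.map_apply, Rmat, Matrix.sub_apply, Matrix.add_apply, Matrix.smul_apply,
    smul_eq_mul, Pmat_apply, Qmat_apply, Matrix.one_apply, map_sub, map_add, map_mul,
    apply_ite (algebraMap ℂ A), map_one, map_zero, Prod.mk.injEq, ite_and,
    mul_ite, mul_one, mul_zero, ite_mul, zero_mul, one_mul, add_mul, sub_mul,
    Finset.sum_add_distrib, Finset.sum_sub_distrib]
  by_cases hk : k = Idx.neg i <;>
    simp [hk, Finset.sum_ite_eq, Finset.sum_ite_eq', Finset.mul_sum, mul_assoc,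
      Algebra.smul_def]

lemma sum_ite_const {α M : Type*} [Fintype α] [AddCommMonoid M]
    (p : Prop) [Decidable p] (f : α → M) :
    (∑ x : α, if p then f x else 0) = if p then ∑ x : α, f x else 0 := by
  split_ifs <;> simp

lemma rhs_entry {n : ℕ} (c u v : ℂ) (Tu Tv : Matrix (Idx n) (Idx n) A) (i j k l : Idx n) :
    (((1 : Matrix (Idx n) (Idx n) A) ⊗ₖ Tv) * (Tu ⊗ₖ (1 : Matrix (Idx n) (Idx n) A)) *
      (Rmat n c u v).map (algebraMap ℂ A)) (i,k) (j,l)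
    = Tv k l * Tu i j + (c/(u-v)) • (Tv k j * Tu i l)
      - (c/(u-v+c*kappa n)) • (if l = j.neg then ∑ p : Idx n, Tv k p.neg * Tu i p else 0) := by
  rw [Matrix.mul_apply]
  have hmid : ∀ x : Idx n × Idx n,
      (((1 : Matrix (Idx n) (Idx n) A) ⊗ₖ Tv) * (Tu ⊗ₖ (1 : Matrix (Idx n) (Idx n) A))) (i,k) x
        = Tv k x.2 * Tu i x.1 := fun x => mid2_apply Tu Tv i k x.1 x.2
  simp only [hmid]
  rw [Fintype.sum_prod_type]
  simp only [Matrix.map_apply, Rmat, Matrix.sub_apply, Matrix.add_apply, Matrix.smul_apply,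
    smul_eq_mul, Pmat_apply, Qmat_apply, Matrix.one_apply, map_sub, map_add, map_mul,
    apply_ite (algebraMap ℂ A), map_one, map_zero, Prod.mk.injEq, ite_and,
    mul_ite, mul_one, mul_zero, ite_mul, zero_mul, one_mul,
    Finset.sum_add_distrib, Finset.sum_sub_distrib]
  by_cases hl : l = Idx.neg j <;>
    simp [hl, Finset.sum_ite_eq, Finset.sum_ite_eq', Finset.mul_sum, mul_assoc,
      mul_add, mul_sub, mul_ite, mul_zero, mul_one, sum_ite_const,
      Finset.sum_add_distrib, Finset.sum_sub_distrib,
      Algebra.smul_def, ← Algebra.commutes]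

lemma rearrange {M : Type*} [AddCommGroup M] (X X' Y1 Y2 Z1 Z2 : M) :
    X + Y1 - Z1 = X' + Y2 - Z2 ↔ X - X' = (Y2 - Y1) + (Z1 - Z2) := by
  have e : (X + Y1 - Z1) - (X' + Y2 - Z2) = (X - X') - ((Y2 - Y1) + (Z1 - Z2)) := by abel
  rw [← sub_eq_zero, e, sub_eq_zero]


end Aux

/-- the RTT relation holds iff for all indices `i, j, k, l` the
entrywise commutation relation
`[T_{i,j}(u), T_{k,l}(v)] = (c/(u−v))(T_{k,j}(v)T_{i,l}(u) − T_{k,j}(u)T_{i,l}(v))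
 + (c/(u−v+cκ))(δ_{k,−i} Σ_p T_{p,j}(u)T_{−p,l}(v) − δ_{l,−j} Σ_p T_{k,−p}(v)T_{i,p}(u))`
holds. -/
theorem statement5 (n : ℕ) (hn : 1 ≤ n) (c : ℂ) (hc : c ≠ 0)
    {A : Type*} [Ring A] [Algebra ℂ A]
    (u v : ℂ) (h0 : u - v ≠ 0) (h1 : u - v + c * kappa n ≠ 0)
    (Tu Tv : Matrix (Idx n) (Idx n) A) :
    RTTrel n c u v Tu Tv ↔
      ∀ i j k l : Idx n,
        Tu i j * Tv k l - Tv k l * Tu i j =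
          (c / (u - v)) • (Tv k j * Tu i l - Tu k j * Tv i l) +
          (c / (u - v + c * kappa n)) •
            ((if k = i.neg then ∑ p : Idx n, Tu p j * Tv p.neg l else 0) -
             (if l = j.neg then ∑ p : Idx n, Tv k p.neg * Tu i p else 0)) := by
  unfold RTTrel
  rw [← Matrix.ext_iff]
  constructor
  · intro h i j k l
    have H := h (i, k) (j, l)
    rw [lhs_entry, rhs_entry, rearrange] at H
    rw [smul_sub, smul_sub]
    exact H
  · rintro h ⟨i, k⟩ ⟨j, l⟩
    rw [lhs_entry, rhs_entry, rearrange, ← smul_sub, ← smul_sub]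
    exact h i j k l

end
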